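/- Let B be a symmetric positive definite matrix with spectral radius ρ(kB) < 1 for a given k > 0. Then the forward-Euler normalized flow Ũ^{n+1} = (I − kB)Uⁿ, U^{n+1} = Ũ^{n+1}/‖Ũ^{n+1}‖, is energy diminishing for the energy E(U) = UᵀAU with A = (I − kB)^{-1}B, i.e. E(U^{n+1}) ≤ E(Uⁿ) for all n. -/

import Mathlib

open Matrix
noncomputable section

lemma cs_aux {N : ℕ} {M : Matrix (Fin N) (Fin N) ℝ} (hM : M.PosSemidef)
    (x y : Fin N → ℝ) :
    (x ⬝ᵥ M *ᵥ y) ^ 2 ≤ (x ⬝ᵥ M *ᵥ x) * (y ⬝ᵥ M *ᵥ y) := by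
  obtain ⟨D, rfl⟩ : ∃ D : Matrix (Fin N) (Fin N) ℝ, M = Dᴴ * D := by
    open scoped MatrixOrder in
    obtain ⟨D, hD⟩ := CStarAlgebra.nonneg_iff_eq_star_mul_self.mp hM.nonneg
    exact ⟨D, hD⟩
  have key : ∀ a b : Fin N → ℝ, a ⬝ᵥ (Dᴴ * D) *ᵥ b = (D *ᵥ a) ⬝ᵥ (D *ᵥ b) := by
    intro a b
    rw [← Matrix.mulVec_mulVec, Matrix.dotProduct_mulVec, Matrix.vecMul_conjTranspose]
    simp
  rw [key, key, key]
  simpa [dotProduct, pow_two] using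
    Finset.sum_mul_sq_le_sq_mul_sq Finset.univ (D *ᵥ x) (D *ᵥ y)

lemma dp_self_pos {N : ℕ} {w : Fin N → ℝ} (hw : w ≠ 0) : 0 < w ⬝ᵥ w := by
  rcases (Finset.sum_nonneg (fun i _ => mul_self_nonneg (w i))).lt_or_eq with h | h
  · exact h
  · exact absurd ((dotProduct_self_eq_zero).mp h.symm) hw

lemma key_step {N : ℕ} (B C : Matrix (Fin N) (Fin N) ℝ) (k : ℝ) (hk : 0 < k)
    (hCpos : C.PosDef) (hBC : B = k⁻¹ • ((1 : Matrix (Fin N) (Fin N) ℝ) - C))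
    (v : Fin N → ℝ) (hv : v ⬝ᵥ v = 1) :
    ((Real.sqrt ((C *ᵥ v) ⬝ᵥ (C *ᵥ v)))⁻¹ • (C *ᵥ v)) ⬝ᵥ
        ((Real.sqrt ((C *ᵥ v) ⬝ᵥ (C *ᵥ v)))⁻¹ • (C *ᵥ v)) = 1 ∧
    ((Real.sqrt ((C *ᵥ v) ⬝ᵥ (C *ᵥ v)))⁻¹ • (C *ᵥ v)) ⬝ᵥ
        (C⁻¹ * B) *ᵥ ((Real.sqrt ((C *ᵥ v) ⬝ᵥ (C *ᵥ v)))⁻¹ • (C *ᵥ v)) ≤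
      v ⬝ᵥ (C⁻¹ * B) *ᵥ v := by
  have hdet : C.det ≠ 0 := hCpos.det_pos.ne'
  have hCC : C * C⁻¹ = 1 := Matrix.mul_nonsing_inv C (isUnit_iff_ne_zero.mpr hdet)
  have hCC' : C⁻¹ * C = 1 := Matrix.nonsing_inv_mul C (isUnit_iff_ne_zero.mpr hdet)
  have hinj : Function.Injective C.mulVec :=
    Matrix.mulVec_injective_iff_isUnit.mpr hCpos.isUnit
  have hv0 : v ≠ 0 := by
    intro h; rw [h] at hv; simp at hv
  set a : ℝ := v ⬝ᵥ C *ᵥ v with hadef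
  set b : ℝ := (C *ᵥ v) ⬝ᵥ (C *ᵥ v) with hbdef
  set c : ℝ := v ⬝ᵥ C⁻¹ *ᵥ v with hcdef
  have ha : 0 < a := by simpa [hadef] using hCpos.dotProduct_mulVec_pos hv0
  have hCv0 : C *ᵥ v ≠ 0 := fun h => hv0 (hinj (by simpa using h))
  have hb : 0 < b := dp_self_pos hCv0
  have hc : 0 < c := by simpa [hcdef] using hCpos.inv.dotProduct_mulVec_pos hv0
  set s : ℝ := Real.sqrt b with hsdef
  have hs : 0 < s := Real.sqrt_pos.mpr hb
  have hss : s * s = b := Real.mul_self_sqrt hb.le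
  -- Cauchy–Schwarz 1 : a² ≤ b
  have CS1 : a ^ 2 ≤ b := by
    have h := Finset.sum_mul_sq_le_sq_mul_sq Finset.univ v (C *ᵥ v)
    have h2 : a ^ 2 ≤ (v ⬝ᵥ v) * b := by
      simpa [hadef, hbdef, dotProduct, pow_two] using h
    rwa [hv, one_mul] at h2
  -- Cauchy–Schwarz 2 : 1 ≤ a * c
  have CS2 : 1 ≤ a * c := by
    have h := cs_aux hCpos.posSemidef v (C⁻¹ *ᵥ v)
    have hCCv : C *ᵥ (C⁻¹ *ᵥ v) = v := by
      rw [Matrix.mulVec_mulVec, hCC, Matrix.one_mulVec]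
    rw [hCCv, hv, one_pow] at h
    rwa [dotProduct_comm (C⁻¹ *ᵥ v) v, ← hcdef, ← hadef] at h
  have main : a ≤ b * c := by
    have h1 : a ^ 2 * c ≤ b * c := mul_le_mul_of_nonneg_right CS1 hc.le
    nlinarith
  have hcomm : B * C = C * B := by
    rw [hBC]
    simp only [Matrix.smul_mul, Matrix.mul_smul, Matrix.sub_mul, Matrix.mul_sub,
      Matrix.one_mul, Matrix.mul_one]
  have hMw : (C⁻¹ * B) *ᵥ (C *ᵥ v) = B *ᵥ v := by
    rw [Matrix.mulVec_mulVec, Matrix.mul_assoc, hcomm, ← Matrix.mul_assoc, hCC',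
      Matrix.one_mul]
  have hBv : B *ᵥ v = k⁻¹ • (v - C *ᵥ v) := by
    rw [hBC, Matrix.smul_mulVec, Matrix.sub_mulVec, Matrix.one_mulVec]
  have hdot1 : (C *ᵥ v) ⬝ᵥ (B *ᵥ v) = k⁻¹ * (a - b) := by
    rw [hBv, dotProduct_smul, smul_eq_mul, dotProduct_sub,
      dotProduct_comm (C *ᵥ v) v, ← hadef, ← hbdef]
  have hRHS : v ⬝ᵥ (C⁻¹ * B) *ᵥ v = k⁻¹ * (c - 1) := by
    rw [← Matrix.mulVec_mulVec, hBv, Matrix.mulVec_smul, Matrix.mulVec_sub,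
      Matrix.mulVec_mulVec, hCC', Matrix.one_mulVec, dotProduct_smul, smul_eq_mul,
      dotProduct_sub, ← hcdef, hv]
  constructor
  · rw [dotProduct_smul, smul_dotProduct, ← hbdef, smul_eq_mul, smul_eq_mul]
    field_simp
    linarith [hss]
  · have hLHS : (s⁻¹ • (C *ᵥ v)) ⬝ᵥ (C⁻¹ * B) *ᵥ (s⁻¹ • (C *ᵥ v))
        = s⁻¹ * (s⁻¹ * (k⁻¹ * (a - b))) := by
      rw [Matrix.mulVec_smul, hMw, smul_dotProduct, dotProduct_smul,
        smul_eq_mul, smul_eq_mul, hdot1]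
    rw [hLHS, hRHS]
    have h2 : s⁻¹ * s⁻¹ * b = 1 := by
      field_simp
      linarith [hss]
    have hkinv : 0 < k⁻¹ := inv_pos.mpr hk
    have h3 : s⁻¹ * s⁻¹ * a ≤ c := by
      have h4 : s⁻¹ * s⁻¹ * a ≤ s⁻¹ * s⁻¹ * (b * c) :=
        mul_le_mul_of_nonneg_left main (mul_nonneg (inv_nonneg.mpr hs.le) (inv_nonneg.mpr hs.le))
      calc s⁻¹ * s⁻¹ * a ≤ s⁻¹ * s⁻¹ * (b * c) := h4
        _ = (s⁻¹ * s⁻¹ * b) * c := by ring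
        _ = c := by rw [h2, one_mul]
    calc s⁻¹ * (s⁻¹ * (k⁻¹ * (a - b))) = k⁻¹ * (s⁻¹ * s⁻¹ * a - s⁻¹ * s⁻¹ * b) := by ring
      _ = k⁻¹ * (s⁻¹ * s⁻¹ * a - 1) := by rw [h2]
      _ ≤ k⁻¹ * (c - 1) := by
          apply mul_le_mul_of_nonneg_left _ hkinv.le
          linarith

theorem stmt11 {n : ℕ} (B : Matrix (Fin n) (Fin n) ℝ) (hB : B.PosDef)
    (k : ℝ) (hk : 0 < k) (hρ : ∀ μ ∈ spectrum ℝ (k • B), |μ| < 1)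
    (U : ℕ → Fin n → ℝ) (hU0 : U 0 ⬝ᵥ U 0 = 1)
    (hstep : ∀ m : ℕ,
      U (m + 1) =
        (Real.sqrt ((((1 : Matrix (Fin n) (Fin n) ℝ) - k • B) *ᵥ U m) ⬝ᵥ
            (((1 : Matrix (Fin n) (Fin n) ℝ) - k • B) *ᵥ U m)))⁻¹ •
          (((1 : Matrix (Fin n) (Fin n) ℝ) - k • B) *ᵥ U m)) :
    ∀ m : ℕ,
      U (m + 1) ⬝ᵥ ((((1 : Matrix (Fin n) (Fin n) ℝ) - k • B)⁻¹ * B) *ᵥ U (m + 1)) ≤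
        U m ⬝ᵥ ((((1 : Matrix (Fin n) (Fin n) ℝ) - k • B)⁻¹ * B) *ᵥ U m) := by
  have hCherm : ((1 : Matrix (Fin n) (Fin n) ℝ) - k • B).IsHermitian := by
    have hBh := hB.isHermitian
    simp [Matrix.IsHermitian, Matrix.conjTranspose_sub, Matrix.conjTranspose_smul, hBh.eq]
    exact congrArg (k • ·) hBh.eq
  have hspecC : ∀ ν ∈ spectrum ℝ ((1 : Matrix (Fin n) (Fin n) ℝ) - k • B), 0 < ν := by
    intro ν hν
    have h1 : (1 : Matrix (Fin n) (Fin n) ℝ) - k • B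
        = (algebraMap ℝ (Matrix (Fin n) (Fin n) ℝ)) 1 - k • B := by simp
    rw [h1, ← spectrum.singleton_sub_eq] at hν
    obtain ⟨x, hx, μ, hμ, hsum⟩ := Set.mem_sub.mp hν
    rw [Set.mem_singleton_iff] at hx
    subst hx
    have := abs_lt.mp (hρ μ hμ)
    linarith [this.2, hsum]
  have heig : ∀ i, 0 < hCherm.eigenvalues i := fun i =>
    hspecC _ (hCherm.eigenvalues_mem_spectrum_real i)
  have hCsemi : ((1 : Matrix (Fin n) (Fin n) ℝ) - k • B).PosSemidef :=
    hCherm.posSemidef_iff_eigenvalues_nonneg.mpr (fun i => (heig i).le)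
  have hdet : ((1 : Matrix (Fin n) (Fin n) ℝ) - k • B).det ≠ 0 := by
    have : (0:ℝ) < ∏ i, hCherm.eigenvalues i := Finset.prod_pos (fun i _ => heig i)
    rw [hCherm.det_eq_prod_eigenvalues]
    exact_mod_cast this.ne'
  have hCunit : IsUnit ((1 : Matrix (Fin n) (Fin n) ℝ) - k • B) :=
    (Matrix.isUnit_iff_isUnit_det _).mpr (isUnit_iff_ne_zero.mpr hdet)
  have hCpos : ((1 : Matrix (Fin n) (Fin n) ℝ) - k • B).PosDef := by
    refine Matrix.PosDef.of_dotProduct_mulVec_pos hCherm (fun x hx => ?_)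
    rcases (hCsemi.dotProduct_mulVec_nonneg x).lt_or_eq with h | h
    · exact h
    · exfalso
      have h0 := (hCsemi.dotProduct_mulVec_zero_iff x).mp h.symm
      have hinj := Matrix.mulVec_injective_iff_isUnit.mpr hCunit
      exact hx (hinj (by simp [h0]))
  have hBC : B = k⁻¹ • ((1 : Matrix (Fin n) (Fin n) ℝ) -
      ((1 : Matrix (Fin n) (Fin n) ℝ) - k • B)) := by
    rw [sub_sub_cancel, smul_smul, inv_mul_cancel₀ hk.ne', one_smul]
  have key := fun (v : Fin n → ℝ) (hv : v ⬝ᵥ v = 1) =>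
    key_step B ((1 : Matrix (Fin n) (Fin n) ℝ) - k • B) k hk hCpos hBC v hv
  have hunit : ∀ m, U m ⬝ᵥ U m = 1 := by
    intro m
    induction m with
    | zero => exact hU0
    | succ m ih =>
      rw [hstep m]
      exact (key (U m) ih).1
  intro m
  rw [hstep m]
  exact (key (U m) (hunit m)).2
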